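/- arXiv:1302.0715 — 2 statements merged into one kernel-verified Lean document; each statement's English description precedes it below -/
import Mathlib

section
/- Let n ∈ ℕ and (τ_k)_{k≥1} be a sequence of pairwise distinct elements of 2^ℕ. Then there is a strictly increasing sequence (k_j)_{j≥1} of natural numbers such that for every F ∈ S_n and all scalars (a_j)_{j∈F}: ‖Σ_{j∈F} a_j e_{τ_{k_j}}‖_n ≥ (1/2)·Σ_{j∈F} |a_j|, and moreover ‖Σ_{j∈F} a_j e_{τ_{k_j}}‖_n = Σ_{j∈F} a_j whenever all a_j ≥ 0. In particular, every sequence of distinct unit vectors in (c00(2^ℕ), ‖·‖_n) has a subsequence generating an ℓ1^n spreading model. -/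
abbrev Cantor : Type := ℕ → Bool

/- `wedgeLen σ τ` is the length `|σ∧τ| ∈ ℕ∞` of the longest common initial segment
of `σ` and `τ` (`⊤` if `σ = τ`).  Since wedges `σ∧τ`, `σ∧τ'` of a common sequence are
initial segments of that sequence, comparisons `⊑`, `⊏`, `=` between such wedges are
equivalent to `≤`, `<`, `=` between their lengths. -/
open Classical in
noncomputable def wedgeLen (σ τ : Cantor) : ℕ∞ :=
  if h : σ = τ then ⊤ else ((Nat.find (Function.ne_iff.mp h) : ℕ) : ℕ∞)

/-- `GS n F σ m M` : the pair `(F,σ)` belongs to `𝒢ₛ_n` via a derivation attaching the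
values `min(F,σ) = m` and `max(F,σ) = M`. -/
inductive GS : ℕ → Finset Cantor → Cantor → ℕ∞ → ℕ∞ → Prop
  | base (d : ℕ) (τ : Fin (d + 1) → Cantor) (σ : Cantor) (F : Finset Cantor)
      (h1 : ∀ i, σ ≠ τ i)
      (h2 : 0 < wedgeLen σ (τ 0))
      (h3 : ∀ i j : Fin (d + 1), i < j → wedgeLen σ (τ i) < wedgeLen σ (τ j))
      (h4 : ((d + 1 : ℕ) : ℕ∞) ≤ wedgeLen σ (τ 0))
      (hF : ∀ x, x ∈ F ↔ ∃ i, x = τ i) :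
      GS 1 F σ (wedgeLen σ (τ 0)) (wedgeLen σ (τ (Fin.last d)))
  | up (n : ℕ) (F : Finset Cantor) (σ : Cantor) (m M : ℕ∞) :
      GS n F σ m M → GS (n + 1) F σ m M
  | skipped (n : ℕ) (d : ℕ) (Fs : Fin (d + 1) → Finset Cantor)
      (σs : Fin (d + 1) → Cantor) (mins maxs : Fin (d + 1) → ℕ∞)
      (σ : Cantor) (F : Finset Cantor)
      (hGS : ∀ i, GS n (Fs i) (σs i) (mins i) (maxs i))
      (hdisj : ∀ i j : Fin (d + 1), i ≠ j → ∀ x, x ∈ Fs i → x ∉ Fs j)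
      (hne : ∀ i, σ ≠ σs i)
      (h0 : 0 < wedgeLen σ (σs 0))
      (hmono : ∀ i j : Fin (d + 1), i < j → wedgeLen σ (σs i) < wedgeLen σ (σs j))
      (hlt : ∀ i, wedgeLen σ (σs i) < mins i)
      (hd : ((d + 1 : ℕ) : ℕ∞) ≤ wedgeLen σ (σs 0))
      (hF : ∀ x, x ∈ F ↔ ∃ i, x ∈ Fs i) :
      GS (n + 1) F σ (wedgeLen σ (σs 0)) (wedgeLen σ (σs (Fin.last d)))
  | attached (n : ℕ) (d : ℕ) (Fs : Fin (d + 1) → Finset Cantor)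
      (mins maxs : Fin (d + 1) → ℕ∞) (σ : Cantor) (F : Finset Cantor)
      (hGS : ∀ i, GS n (Fs i) σ (mins i) (maxs i))
      (hdisj : ∀ i j : Fin (d + 1), i ≠ j → ∀ x, x ∈ Fs i → x ∉ Fs j)
      (hord : ∀ i : Fin d, maxs i.castSucc < mins i.succ)
      (hd : ((d + 1 : ℕ) : ℕ∞) ≤ mins 0)
      (hF : ∀ x, x ∈ F ↔ ∃ i, x ∈ Fs i) :
      GS (n + 1) F σ (mins 0) (maxs (Fin.last d))

/-- The family `𝒢_n` of finite subsets of the Cantor set. -/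
def Gfam (n : ℕ) : Set (Finset Cantor) :=
  {F | F = ∅ ∨ ∃ σ m M, GS n F σ m M}

/-- The Schreier families `S_n` (for `n ≥ 1`; the value at `0` is a dummy). -/
def Schreier : ℕ → Set (Finset ℕ)
  | 0 => {∅}
  | 1 => {F | ∀ k ∈ F, F.card ≤ k}
  | (n + 2) => {F | F = ∅ ∨ ∃ d : ℕ, ∃ Fs : Fin (d + 1) → Finset ℕ,
      (∀ i, Fs i ∈ Schreier (n + 1) ∧ (Fs i).Nonempty) ∧
      (∀ i : Fin d, ∀ a ∈ Fs i.castSucc, ∀ b ∈ Fs i.succ, a < b) ∧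
      (∀ k ∈ Fs 0, d + 1 ≤ k) ∧
      (∀ x, x ∈ F ↔ ∃ i, x ∈ Fs i)}

/-- The norm `‖·‖_n` on `c₀₀(2^ℕ)`. -/
noncomputable def gnorm (n : ℕ) (x : Cantor →₀ ℝ) : ℝ :=
  sSup {r : ℝ | ∃ F ∈ Gfam n, r = |∑ τ ∈ F, x τ|}

lemma wedgeLen_self (σ : Cantor) : wedgeLen σ σ = ⊤ := dif_pos rfl

lemma wedgeLen_ne_top {σ τ : Cantor} (h : σ ≠ τ) : wedgeLen σ τ ≠ ⊤ := by
  unfold wedgeLen; rw [dif_neg h]; exact ENat.coe_ne_top _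

lemma le_wedgeLen {σ τ : Cantor} {m : ℕ} (h : ∀ t < m, σ t = τ t) :
    (m : ℕ∞) ≤ wedgeLen σ τ := by
  unfold wedgeLen
  split
  · exact le_top
  · next hne =>
    rw [Nat.cast_le, Nat.le_find_iff]
    exact fun t ht hne' => hne' (h t ht)

open Classical in
noncomputable def chain (τ : ℕ → Cantor) : ℕ → {A : Set ℕ // A.Infinite}
  | 0 => ⟨Set.univ, Set.infinite_univ⟩
  | (m+1) =>
    if h : {i ∈ (chain τ m).1 | τ i m = true}.Infinite then ⟨_, h⟩
    else ⟨{i ∈ (chain τ m).1 | τ i m = false}, by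
      refine ((chain τ m).2.diff (Set.not_infinite.mp h)).mono ?_
      intro i hi
      rcases hi with ⟨hi1, hi2⟩
      refine ⟨hi1, ?_⟩
      simp only [Set.mem_setOf_eq, not_and] at hi2
      cases hb : τ i m
      · rfl
      · exact absurd hb (hi2 hi1)⟩

open Classical in
noncomputable def limpt (τ : ℕ → Cantor) : Cantor := fun m =>
  if {i ∈ (chain τ m).1 | τ i m = true}.Infinite then true else false

lemma chain_succ_subset (τ : ℕ → Cantor) (m : ℕ) :
    (chain τ (m+1)).1 ⊆ {i ∈ (chain τ m).1 | τ i m = limpt τ m} := by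
  classical
  unfold limpt
  rw [chain]
  split_ifs with h
  · intro i hi; exact ⟨hi.1, hi.2⟩
  · intro i hi; exact ⟨hi.1, hi.2⟩

lemma chain_agree (τ : ℕ → Cantor) : ∀ m, ∀ i ∈ (chain τ m).1, ∀ t < m, τ i t = limpt τ t := by
  intro m
  induction m with
  | zero => intro i _ t ht; omega
  | succ m ih =>
    intro i hi t ht
    have hmem := chain_succ_subset τ m hi
    rcases Nat.lt_succ_iff_lt_or_eq.mp ht with h | h
    · exact ih i hmem.1 t h
    · subst h; exact hmem.2

lemma mem_chain_wedge (τ : ℕ → Cantor) {m i : ℕ} (h : i ∈ (chain τ m).1) :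
    (m : ℕ∞) ≤ wedgeLen (limpt τ) (τ i) :=
  le_wedgeLen fun t ht => (chain_agree τ m i h t ht).symm

noncomputable def Tset (τ : ℕ → Cantor) (m : ℕ) : Set ℕ :=
  (chain τ m).1 \ {i | τ i = limpt τ}

lemma Tset_infinite {τ : ℕ → Cantor} (hτ : Function.Injective τ) (m : ℕ) :
    (Tset τ m).Infinite := by
  refine (chain τ m).2.diff ?_
  refine Set.Subsingleton.finite ?_
  intro i hi j hj
  exact hτ (hi.trans hj.symm)

lemma Tset_exists {τ : ℕ → Cantor} (hτ : Function.Injective τ) (p m : ℕ) :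
    ∃ i ∈ Tset τ m, p < i := (Tset_infinite hτ m).exists_gt p

noncomputable def subk (τ : ℕ → Cantor) (hτ : Function.Injective τ) : ℕ → ℕ
  | 0 => Classical.choose (Tset_exists hτ 0 1)
  | (j+1) => Classical.choose (Tset_exists hτ (subk τ hτ j)
      ((wedgeLen (limpt τ) (τ (subk τ hτ j))).toNat + j + 2))

noncomputable def subw (τ : ℕ → Cantor) (hτ : Function.Injective τ) (j : ℕ) : ℕ :=
  (wedgeLen (limpt τ) (τ (subk τ hτ j))).toNat

lemma subk_mem (τ : ℕ → Cantor) (hτ : Function.Injective τ) :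
    ∀ j, ∃ m, subk τ hτ j ∈ Tset τ m ∧ j ≤ m ∧ (j = 0 ∨ subw τ hτ (j-1) < m) := by
  intro j
  cases j with
  | zero =>
    obtain ⟨h1, _⟩ := Classical.choose_spec (Tset_exists hτ 0 1)
    exact ⟨1, by rw [subk]; exact h1, by omega, Or.inl rfl⟩
  | succ j =>
    obtain ⟨h1, _⟩ := Classical.choose_spec (Tset_exists hτ (subk τ hτ j)
      ((wedgeLen (limpt τ) (τ (subk τ hτ j))).toNat + j + 2))
    refine ⟨(wedgeLen (limpt τ) (τ (subk τ hτ j))).toNat + j + 2, by rw [subk]; exact h1, by omega,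
      Or.inr ?_⟩
    simp only [Nat.add_sub_cancel, subw]
    omega

lemma subk_ne (τ : ℕ → Cantor) (hτ : Function.Injective τ) (j : ℕ) :
    τ (subk τ hτ j) ≠ limpt τ := by
  obtain ⟨m, hm, -⟩ := subk_mem τ hτ j
  exact hm.2

lemma subw_eq (τ : ℕ → Cantor) (hτ : Function.Injective τ) (j : ℕ) :
    wedgeLen (limpt τ) (τ (subk τ hτ j)) = ((subw τ hτ j : ℕ) : ℕ∞) := by
  have h : limpt τ ≠ τ (subk τ hτ j) := fun h => subk_ne τ hτ j h.symm
  exact (ENat.coe_toNat (wedgeLen_ne_top h)).symm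

lemma subw_ge (τ : ℕ → Cantor) (hτ : Function.Injective τ) (j : ℕ) :
    j ≤ subw τ hτ j := by
  obtain ⟨m, hm, hjm, -⟩ := subk_mem τ hτ j
  have := mem_chain_wedge τ hm.1
  rw [subw_eq τ hτ j] at this
  have : m ≤ subw τ hτ j := by exact_mod_cast this
  omega

lemma subw_succ_gt (τ : ℕ → Cantor) (hτ : Function.Injective τ) (j : ℕ) :
    subw τ hτ j < subw τ hτ (j+1) := by
  obtain ⟨m, hm, hjm, hor⟩ := subk_mem τ hτ (j+1)
  have := mem_chain_wedge τ hm.1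
  rw [subw_eq τ hτ (j+1)] at this
  have h2 : m ≤ subw τ hτ (j+1) := by exact_mod_cast this
  rcases hor with h | h
  · omega
  · simp only [Nat.add_sub_cancel] at h; omega

lemma subw_mono (τ : ℕ → Cantor) (hτ : Function.Injective τ) :
    StrictMono (subw τ hτ) := strictMono_nat_of_lt_succ (subw_succ_gt τ hτ)

lemma subk_mono (τ : ℕ → Cantor) (hτ : Function.Injective τ) :
    StrictMono (subk τ hτ) := by
  apply strictMono_nat_of_lt_succ
  intro j
  obtain ⟨-, h2⟩ := Classical.choose_spec (Tset_exists hτ (subk τ hτ j)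
      ((wedgeLen (limpt τ) (τ (subk τ hτ j))).toNat + j + 2))
  rw [subk]
  exact h2

lemma blocks_lt {d : ℕ} {Fs : Fin (d+1) → Finset ℕ}
    (hne : ∀ i, (Fs i).Nonempty)
    (hadj : ∀ i : Fin d, ∀ a ∈ Fs i.castSucc, ∀ b ∈ Fs i.succ, a < b) :
    ∀ i j : Fin (d+1), i < j → ∀ a ∈ Fs i, ∀ b ∈ Fs j, a < b := by
  intro i j
  induction j using Fin.induction with
  | zero => intro h; exact absurd h (Nat.not_lt_zero _)
  | succ j ih =>
    intro h a ha b hb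
    have hle : i ≤ j.castSucc := by
      rw [Fin.le_def]; rw [Fin.lt_def] at h; simp only [Fin.val_succ] at h
      simpa using Nat.lt_succ_iff.mp h
    rcases eq_or_lt_of_le hle with h' | h'
    · exact hadj j a (h' ▸ ha) b hb
    · obtain ⟨c, hc⟩ := hne j.castSucc
      exact lt_trans (ih h' a ha c hc) (hadj j c hc b hb)

open Classical in
lemma key {τ : ℕ → Cantor} (hτ : Function.Injective τ) {σ : Cantor} {k w : ℕ → ℕ}
    (hk : StrictMono k)
    (hw : ∀ j, wedgeLen σ (τ (k j)) = ((w j : ℕ) : ℕ∞))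
    (hwm : StrictMono w) (hwge : ∀ j, j ≤ w j) (n : ℕ) :
    ∀ F ∈ Schreier (n+1), ∀ G : Finset ℕ, G ⊆ F → ∀ hG : G.Nonempty,
      GS (n+1) (G.image (fun j => τ (k j))) σ
        ((w (G.min' hG) : ℕ) : ℕ∞) ((w (G.max' hG) : ℕ) : ℕ∞) := by
  classical
  induction n with
  | zero =>
    intro F hF G hGF hG
    have hF' : ∀ j ∈ F, F.card ≤ j := hF
    have hcard : G.card = (G.card - 1) + 1 := (Nat.succ_pred_eq_of_pos hG.card_pos).symm
    set d := G.card - 1 with hd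
    let e := G.orderIsoOfFin hcard
    have hmemG : ∀ i, ((e i : ℕ)) ∈ G := fun i => (e i).2
    have hmono : ∀ i j : Fin (d+1), i < j → ((e i : ℕ)) < ((e j : ℕ)) := by
      intro i j hij
      exact_mod_cast e.lt_iff_lt.mpr hij
    have hle : ∀ i j : Fin (d+1), i ≤ j → ((e i : ℕ)) ≤ ((e j : ℕ)) := by
      intro i j hij
      exact_mod_cast e.le_iff_le.mpr hij
    have hsurj : ∀ g ∈ G, ∃ i, (e i : ℕ) = g := by
      intro g hg
      exact ⟨e.symm ⟨g, hg⟩, by rw [OrderIso.apply_symm_apply]⟩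
    have hcardle : ∀ i, d + 1 ≤ (e i : ℕ) := by
      intro i
      calc d + 1 = G.card := hcard.symm
        _ ≤ F.card := Finset.card_le_card hGF
        _ ≤ (e i : ℕ) := hF' _ (hGF (hmemG i))
    have hmin : G.min' hG = (e 0 : ℕ) := by
      refine le_antisymm (G.min'_le _ (hmemG 0)) ?_
      obtain ⟨i, hi⟩ := hsurj _ (G.min'_mem hG)
      rw [← hi]
      exact hle 0 i (Fin.zero_le i)
    have hmax : G.max' hG = (e (Fin.last d) : ℕ) := by
      refine le_antisymm ?_ (G.le_max' _ (hmemG _))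
      obtain ⟨i, hi⟩ := hsurj _ (G.max'_mem hG)
      rw [← hi]
      exact hle i (Fin.last d) (Fin.le_last i)
    have h1 : ∀ i : Fin (d+1), σ ≠ τ (k (e i : ℕ)) := by
      intro i heq
      have := hw ((e i : ℕ))
      rw [← heq, wedgeLen_self] at this
      exact ENat.coe_ne_top _ this.symm
    have h2 : 0 < wedgeLen σ (τ (k (e 0 : ℕ))) := by
      rw [hw]
      have : 0 < w ((e 0 : ℕ)) := lt_of_lt_of_le (lt_of_lt_of_le (Nat.succ_pos d) (hcardle 0)) (hwge _)
      exact_mod_cast this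
    have h3 : ∀ i j : Fin (d+1), i < j →
        wedgeLen σ (τ (k (e i : ℕ))) < wedgeLen σ (τ (k (e j : ℕ))) := by
      intro i j hij
      rw [hw, hw]
      exact_mod_cast hwm (hmono i j hij)
    have h4 : ((d + 1 : ℕ) : ℕ∞) ≤ wedgeLen σ (τ (k (e 0 : ℕ))) := by
      rw [hw]
      exact_mod_cast le_trans (hcardle 0) (hwge _)
    have hFimg : ∀ x, x ∈ G.image (fun j => τ (k j)) ↔ ∃ i : Fin (d+1), x = τ (k (e i : ℕ)) := by
      intro x
      rw [Finset.mem_image]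
      constructor
      · rintro ⟨g, hg, rfl⟩
        obtain ⟨i, hi⟩ := hsurj g hg
        exact ⟨i, by rw [hi]⟩
      · rintro ⟨i, rfl⟩
        exact ⟨_, hmemG i, rfl⟩
    have hmin' : ((w (G.min' hG) : ℕ) : ℕ∞) = wedgeLen σ (τ (k (e 0 : ℕ))) := by
      rw [hw, hmin]
    have hmax' : ((w (G.max' hG) : ℕ) : ℕ∞) = wedgeLen σ (τ (k (e (Fin.last d) : ℕ))) := by
      rw [hw, hmax]
    rw [hmin', hmax']
    exact GS.base d (fun i => τ (k (e i : ℕ))) σ _ h1 h2 h3 h4 hFimg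
  | succ n ih =>
    intro F hF G hGF hG
    have hF' : F = ∅ ∨ ∃ d : ℕ, ∃ Fs : Fin (d + 1) → Finset ℕ,
        (∀ i, Fs i ∈ Schreier (n + 1) ∧ (Fs i).Nonempty) ∧
        (∀ i : Fin d, ∀ a ∈ Fs i.castSucc, ∀ b ∈ Fs i.succ, a < b) ∧
        (∀ k ∈ Fs 0, d + 1 ≤ k) ∧
        (∀ x, x ∈ F ↔ ∃ i, x ∈ Fs i) := hF
    rcases hF' with rfl | ⟨d, Fs, hmem, hadj, hfirst, hunion⟩
    · obtain ⟨g, hg⟩ := hG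
      exact absurd (hGF hg) (Finset.notMem_empty g)
    have bl : ∀ i j : Fin (d+1), i < j → ∀ a ∈ Fs i, ∀ b ∈ Fs j, a < b :=
      blocks_lt (fun i => (hmem i).2) hadj
    have finj : Function.Injective (fun j => τ (k j)) := fun a b hab => hk.injective (hτ hab)
    set I : Finset (Fin (d+1)) := Finset.univ.filter (fun i => (G ∩ Fs i).Nonempty) with hI
    have hmemI : ∀ i, i ∈ I ↔ (G ∩ Fs i).Nonempty := by
      intro i; rw [hI, Finset.mem_filter]; simp
    have hIne : I.Nonempty := by
      obtain ⟨g, hg⟩ := hG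
      obtain ⟨i, hi⟩ := (hunion g).mp (hGF hg)
      exact ⟨i, (hmemI i).mpr ⟨g, Finset.mem_inter.mpr ⟨hg, hi⟩⟩⟩
    have hcI : I.card = (I.card - 1) + 1 := (Nat.succ_pred_eq_of_pos hIne.card_pos).symm
    set d' := I.card - 1 with hd'
    let e := I.orderIsoOfFin hcI
    have hEmem : ∀ i, ((e i : Fin (d+1))) ∈ I := fun i => (e i).2
    have hEmono : ∀ i j : Fin (d'+1), i < j → ((e i : Fin (d+1))) < ((e j : Fin (d+1))) :=
      fun i j hij => e.lt_iff_lt.mpr hij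
    have hEle : ∀ i j : Fin (d'+1), i ≤ j → ((e i : Fin (d+1))) ≤ ((e j : Fin (d+1))) :=
      fun i j hij => e.le_iff_le.mpr hij
    have hEsurj : ∀ i ∈ I, ∃ j, (e j : Fin (d+1)) = i := by
      intro i hi
      exact ⟨e.symm ⟨i, hi⟩, by rw [OrderIso.apply_symm_apply]⟩
    have hGine : ∀ i : Fin (d'+1), (G ∩ Fs (e i : Fin (d+1))).Nonempty :=
      fun i => (hmemI _).mp (hEmem i)
    have hGS : ∀ i : Fin (d'+1), GS (n+1) ((G ∩ Fs (e i : Fin (d+1))).image (fun j => τ (k j))) σ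
        ((w ((G ∩ Fs (e i : Fin (d+1))).min' (hGine i)) : ℕ) : ℕ∞)
        ((w ((G ∩ Fs (e i : Fin (d+1))).max' (hGine i)) : ℕ) : ℕ∞) :=
      fun i => ih (Fs (e i : Fin (d+1))) (hmem _).1 _ Finset.inter_subset_right (hGine i)
    have hdisj : ∀ i j : Fin (d'+1), i ≠ j → ∀ x,
        x ∈ (G ∩ Fs (e i : Fin (d+1))).image (fun j => τ (k j)) →
        x ∉ (G ∩ Fs (e j : Fin (d+1))).image (fun j => τ (k j)) := by
      intro i j hij x hxi hxj
      obtain ⟨g, hg, rfl⟩ := Finset.mem_image.mp hxi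
      obtain ⟨g', hg', heq⟩ := Finset.mem_image.mp hxj
      have hgg : g' = g := finj heq
      rw [hgg] at hg'
      have hEne : (e i : Fin (d+1)) ≠ (e j : Fin (d+1)) := by
        intro h
        exact hij (e.injective (Subtype.ext h))
      rcases hEne.lt_or_gt with h | h
      · exact lt_irrefl g (bl _ _ h g (Finset.mem_inter.mp hg).2 g (Finset.mem_inter.mp hg').2)
      · exact lt_irrefl g (bl _ _ h g (Finset.mem_inter.mp hg').2 g (Finset.mem_inter.mp hg).2)
    have hord : ∀ i : Fin d',
        ((w ((G ∩ Fs (e i.castSucc : Fin (d+1))).max' (hGine i.castSucc)) : ℕ) : ℕ∞) <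
        ((w ((G ∩ Fs (e i.succ : Fin (d+1))).min' (hGine i.succ)) : ℕ) : ℕ∞) := by
      intro i
      have hlt := bl _ _ (hEmono _ _ (Fin.castSucc_lt_succ : i.castSucc < i.succ))
        _ (Finset.mem_inter.mp ((G ∩ Fs _).max'_mem (hGine i.castSucc))).2
        _ (Finset.mem_inter.mp ((G ∩ Fs _).min'_mem (hGine i.succ))).2
      exact_mod_cast hwm hlt
    have hd1 : ∀ g ∈ G, d + 1 ≤ g := by
      intro g hg
      obtain ⟨i, hi⟩ := (hunion g).mp (hGF hg)
      rcases eq_or_ne i 0 with rfl | hne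
      · exact hfirst g hi
      · obtain ⟨b, hb⟩ := (hmem 0).2
        have : b < g := bl 0 i (Fin.pos_of_ne_zero hne) b hb g hi
        have := hfirst b hb
        omega
    have hdd : ((d' + 1 : ℕ) : ℕ∞) ≤
        ((w ((G ∩ Fs (e 0 : Fin (d+1))).min' (hGine 0)) : ℕ) : ℕ∞) := by
      have h1 : d' + 1 ≤ d + 1 := by
        have hcard := Finset.card_filter_le (Finset.univ : Finset (Fin (d+1)))
          (fun i => (G ∩ Fs i).Nonempty)
        rw [← hI] at hcard
        rw [Finset.card_univ, Fintype.card_fin] at hcard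
        omega
      have h2 : d + 1 ≤ (G ∩ Fs (e 0 : Fin (d+1))).min' (hGine 0) :=
        hd1 _ (Finset.mem_inter.mp ((G ∩ Fs _).min'_mem (hGine 0))).1
      have h3 := hwge ((G ∩ Fs (e 0 : Fin (d+1))).min' (hGine 0))
      exact_mod_cast by omega
    have hFimg : ∀ x, x ∈ G.image (fun j => τ (k j)) ↔
        ∃ i : Fin (d'+1), x ∈ (G ∩ Fs (e i : Fin (d+1))).image (fun j => τ (k j)) := by
      intro x
      constructor
      · intro hx
        obtain ⟨g, hg, rfl⟩ := Finset.mem_image.mp hx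
        obtain ⟨i, hi⟩ := (hunion g).mp (hGF hg)
        have hiI : i ∈ I := (hmemI i).mpr ⟨g, Finset.mem_inter.mpr ⟨hg, hi⟩⟩
        obtain ⟨j, hj⟩ := hEsurj i hiI
        exact ⟨j, Finset.mem_image_of_mem _ (Finset.mem_inter.mpr ⟨hg, hj ▸ hi⟩)⟩
      · rintro ⟨i, hx⟩
        obtain ⟨g, hg, rfl⟩ := Finset.mem_image.mp hx
        exact Finset.mem_image_of_mem _ (Finset.mem_inter.mp hg).1
    have H := GS.attached (n+1) d'
      (fun i => (G ∩ Fs (e i : Fin (d+1))).image (fun j => τ (k j)))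
      (fun i => ((w ((G ∩ Fs (e i : Fin (d+1))).min' (hGine i)) : ℕ) : ℕ∞))
      (fun i => ((w ((G ∩ Fs (e i : Fin (d+1))).max' (hGine i)) : ℕ) : ℕ∞))
      σ (G.image (fun j => τ (k j))) hGS hdisj hord hdd hFimg
    have hminG : (G ∩ Fs (e (0 : Fin (d'+1)) : Fin (d+1))).min' (hGine 0) = G.min' hG := by
      refine le_antisymm ?_ (G.min'_le _ (Finset.mem_inter.mp
        ((G ∩ Fs _).min'_mem (hGine 0))).1)
      have hmG := G.min'_mem hG
      obtain ⟨i, hi⟩ := (hunion _).mp (hGF hmG)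
      have hiI : i ∈ I := (hmemI i).mpr ⟨_, Finset.mem_inter.mpr ⟨hmG, hi⟩⟩
      obtain ⟨j, hj⟩ := hEsurj i hiI
      rcases eq_or_lt_of_le (hEle 0 j (Fin.zero_le j)) with h | h
      · refine Finset.min'_le _ _ (Finset.mem_inter.mpr ⟨hmG, ?_⟩)
        rw [h, hj]; exact hi
      · exfalso
        obtain ⟨c, hc⟩ := hGine 0
        have h1 : c < G.min' hG := bl _ _ (hj ▸ h) c (Finset.mem_inter.mp hc).2 _ hi
        have h2 := G.min'_le c (Finset.mem_inter.mp hc).1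
        omega
    have hmaxG : (G ∩ Fs (e (Fin.last d') : Fin (d+1))).max' (hGine _) = G.max' hG := by
      refine le_antisymm (G.le_max' _ (Finset.mem_inter.mp
        ((G ∩ Fs _).max'_mem (hGine _))).1) ?_
      have hmG := G.max'_mem hG
      obtain ⟨i, hi⟩ := (hunion _).mp (hGF hmG)
      have hiI : i ∈ I := (hmemI i).mpr ⟨_, Finset.mem_inter.mpr ⟨hmG, hi⟩⟩
      obtain ⟨j, hj⟩ := hEsurj i hiI
      rcases eq_or_lt_of_le (hEle j (Fin.last d') (Fin.le_last j)) with h | h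
      · refine Finset.le_max' _ _ (Finset.mem_inter.mpr ⟨hmG, ?_⟩)
        rw [← h, hj]; exact hi
      · exfalso
        obtain ⟨c, hc⟩ := hGine (Fin.last d')
        have h1 : G.max' hG < c := bl _ _ (hj ▸ h) _ hi c (Finset.mem_inter.mp hc).2
        have h2 := G.le_max' c (Finset.mem_inter.mp hc).1
        omega
    rw [← hminG, ← hmaxG]
    exact H

theorem gnorm_ell1n_spreading_model (n : ℕ) (hn : 1 ≤ n) (τ : ℕ → Cantor)
    (hτ : Function.Injective τ) :
    ∃ k : ℕ → ℕ, StrictMono k ∧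
      ∀ F ∈ Schreier n, ∀ a : ℕ → ℝ,
        (1 / 2) * (∑ j ∈ F, |a j|) ≤
            gnorm n (∑ j ∈ F, Finsupp.single (τ (k j)) (a j)) ∧
        ((∀ j ∈ F, 0 ≤ a j) →
          gnorm n (∑ j ∈ F, Finsupp.single (τ (k j)) (a j)) = ∑ j ∈ F, a j) := by
  classical
  obtain ⟨m, rfl⟩ : ∃ m, n = m + 1 := ⟨n - 1, by omega⟩
  refine ⟨subk τ hτ, subk_mono τ hτ, ?_⟩
  intro F hF a
  set f : ℕ → Cantor := fun j => τ (subk τ hτ j) with hf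
  have finj : Function.Injective f := fun i j hij => (subk_mono τ hτ).injective (hτ hij)
  set x : Cantor →₀ ℝ := ∑ j ∈ F, Finsupp.single (f j) (a j) with hx
  have hval : ∀ j ∈ F, x (f j) = a j := by
    intro j hj
    rw [hx, Finsupp.finset_sum_apply]
    rw [Finset.sum_eq_single j]
    · exact Finsupp.single_eq_same
    · intro i _ hij
      exact Finsupp.single_eq_of_ne' fun h => hij (finj h)
    · intro h; exact absurd hj h
  have hzero : ∀ t, t ∉ F.image f → x t = 0 := by
    intro t ht
    rw [hx, Finsupp.finset_sum_apply]
    refine Finset.sum_eq_zero fun j hj => ?_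
    refine Finsupp.single_eq_of_ne' fun h => ht ?_
    rw [← h]
    exact Finset.mem_image_of_mem f hj
  have hsum : ∀ G ⊆ F, ∑ t ∈ G.image f, x t = ∑ j ∈ G, a j := by
    intro G hGF
    rw [Finset.sum_image (fun i _ j _ h => finj h)]
    exact Finset.sum_congr rfl fun j hj => hval j (hGF hj)
  have habs : ∀ G' : Finset Cantor, |∑ t ∈ G', x t| ≤ ∑ j ∈ F, |a j| := by
    intro G'
    calc |∑ t ∈ G', x t| ≤ ∑ t ∈ G', |x t| := Finset.abs_sum_le_sum_abs _ _
      _ = ∑ t ∈ G'.filter (· ∈ F.image f), |x t| :=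
        (Finset.sum_filter_of_ne (fun t _ h0 => by
          by_contra hmem
          exact h0 (by rw [hzero t hmem, abs_zero]))).symm
      _ ≤ ∑ t ∈ F.image f, |x t| :=
        Finset.sum_le_sum_of_subset_of_nonneg
          (fun t ht => (Finset.mem_filter.mp ht).2) (fun t _ _ => abs_nonneg _)
      _ = ∑ j ∈ F, |a j| := by
        rw [Finset.sum_image (fun i _ j _ h => finj h)]
        exact Finset.sum_congr rfl fun j hj => by rw [hval j hj]
  set Sset : Set ℝ := {r : ℝ | ∃ G' ∈ Gfam (m+1), r = |∑ t ∈ G', x t|} with hSset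
  have hgnorm : gnorm (m+1) x = sSup Sset := rfl
  have hnes : Sset.Nonempty := ⟨0, ∅, Or.inl rfl, by simp⟩
  have hbdd : BddAbove Sset := ⟨∑ j ∈ F, |a j|, by rintro r ⟨G', -, rfl⟩; exact habs G'⟩
  have hmemS : ∀ G ⊆ F, |∑ j ∈ G, a j| ∈ Sset := by
    intro G hGF
    rcases G.eq_empty_or_nonempty with rfl | hGne
    · exact ⟨∅, Or.inl rfl, by simp⟩
    · refine ⟨G.image f, Or.inr ⟨limpt τ, _, _,
        key hτ (subk_mono τ hτ) (subw_eq τ hτ) (subw_mono τ hτ) (subw_ge τ hτ)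
          m F hF G hGF hGne⟩, ?_⟩
      rw [hsum G hGF]
  constructor
  · set P := F.filter (fun j => 0 ≤ a j) with hP
    set N := F.filter (fun j => ¬ 0 ≤ a j) with hN
    have hPN : ∑ j ∈ P, |a j| + ∑ j ∈ N, |a j| = ∑ j ∈ F, |a j| :=
      Finset.sum_filter_add_sum_filter_not F _ _
    have hPa : ∑ j ∈ P, |a j| = |∑ j ∈ P, a j| := by
      rw [abs_of_nonneg (Finset.sum_nonneg fun j hj => (Finset.mem_filter.mp hj).2)]
      exact Finset.sum_congr rfl fun j hj => abs_of_nonneg (Finset.mem_filter.mp hj).2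
    have hNa : ∑ j ∈ N, |a j| = |∑ j ∈ N, a j| := by
      rw [abs_of_nonpos (Finset.sum_nonpos fun j hj =>
        le_of_not_ge (Finset.mem_filter.mp hj).2)]
      rw [← Finset.sum_neg_distrib]
      exact Finset.sum_congr rfl fun j hj =>
        abs_of_neg (lt_of_not_ge (Finset.mem_filter.mp hj).2)
    rcases le_total (∑ j ∈ P, |a j|) (∑ j ∈ N, |a j|) with h | h
    · have h1 : (1/2) * (∑ j ∈ F, |a j|) ≤ ∑ j ∈ N, |a j| := by linarith
      have h2 : |∑ j ∈ N, a j| ∈ Sset := hmemS N (Finset.filter_subset _ _)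
      rw [hgnorm]
      exact le_trans (hNa ▸ h1) (le_csSup hbdd h2)
    · have h1 : (1/2) * (∑ j ∈ F, |a j|) ≤ ∑ j ∈ P, |a j| := by linarith
      have h2 : |∑ j ∈ P, a j| ∈ Sset := hmemS P (Finset.filter_subset _ _)
      rw [hgnorm]
      exact le_trans (hPa ▸ h1) (le_csSup hbdd h2)
  · intro ha
    rw [hgnorm]
    apply le_antisymm
    · refine csSup_le hnes ?_
      rintro r ⟨G', -, rfl⟩
      calc |∑ t ∈ G', x t| ≤ ∑ j ∈ F, |a j| := habs G'
        _ = ∑ j ∈ F, a j := Finset.sum_congr rfl fun j hj => abs_of_nonneg (ha j hj)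
    · have h2 : |∑ j ∈ F, a j| ∈ Sset := hmemS F (subset_refl F)
      rw [abs_of_nonneg (Finset.sum_nonneg ha)] at h2
      exact le_csSup hbdd h2
end

section
/- For every n ∈ ℕ, the unit vector system of X_n is weakly null in the following sense: for every sequence (τ_k)_{k≥1} of pairwise distinct elements of 2^ℕ, the sequence (e_{τ_k})_k of unit vectors converges weakly to 0 in X_n (the completion of (c00(2^ℕ), ‖·‖_n)); that is, f(e_{τ_k}) → 0 for every continuous linear functional f on X_n. -/
open Classical in
lemma le_wedgeLen_iff {σ τ : Cantor} {m : ℕ} :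
    (m : ℕ∞) ≤ wedgeLen σ τ ↔ ∀ j < m, σ j = τ j := by
  unfold wedgeLen
  split_ifs with h
  · subst h; simp
  · rw [Nat.cast_le, Nat.le_find_iff]
    simp [not_ne_iff]

open Classical in
lemma wedgeLen_eq_coe_iff {σ τ : Cantor} {w : ℕ} :
    wedgeLen σ τ = (w : ℕ∞) ↔ (∀ j < w, σ j = τ j) ∧ σ w ≠ τ w := by
  unfold wedgeLen
  split_ifs with h
  · subst h
    simp
  · rw [Nat.cast_inj, Nat.find_eq_iff]
    simp [not_ne_iff, and_comm]

lemma lt_wedgeLen_succ {σ τ : Cantor} {w : ℕ} (h : (w : ℕ∞) < wedgeLen σ τ) :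
    ∀ j < w + 1, σ j = τ j := by
  rw [← le_wedgeLen_iff]
  exact_mod_cast (ENat.add_one_le_iff (by simp)).mpr h

/-- Ultrametric-type lemma. -/
lemma wedgeLen_eq_left {a b c : Cantor} (h : wedgeLen a b < wedgeLen b c) :
    wedgeLen a c = wedgeLen a b := by
  have hne : wedgeLen a b ≠ ⊤ := ne_top_of_lt h
  have hw : wedgeLen a b = ((wedgeLen a b).toNat : ℕ∞) := (ENat.coe_toNat hne).symm
  set w := (wedgeLen a b).toNat with hwdef
  rw [hw] at h ⊢
  obtain ⟨hag, hneq⟩ := wedgeLen_eq_coe_iff.mp hw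
  have hbc : ∀ j < w + 1, b j = c j := lt_wedgeLen_succ h
  rw [wedgeLen_eq_coe_iff]
  constructor
  · intro j hj
    rw [hag j hj, hbc j (by omega)]
  · rw [← hbc w (by omega)]
    exact hneq

/-- Fact A : every element of `F` wedges with `σ` at depth at least `m`, and `m ≤ M`. -/
lemma gs_factA {n : ℕ} {F : Finset Cantor} {σ : Cantor} {m M : ℕ∞}
    (h : GS n F σ m M) : m ≤ M ∧ ∀ τ ∈ F, m ≤ wedgeLen σ τ := by
  induction h with
  | base d τs σ F h1 h2 h3 h4 hF =>
    have key : ∀ k : Fin (d+1), wedgeLen σ (τs 0) ≤ wedgeLen σ (τs k) := by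
      intro k
      rcases eq_or_ne k 0 with rfl | hk
      · exact le_refl _
      · exact (h3 0 k (Fin.pos_of_ne_zero hk)).le
    refine ⟨key (Fin.last d), ?_⟩
    intro τ hτ
    obtain ⟨k, rfl⟩ := (hF τ).mp hτ
    exact key k
  | up n F σ m M h ih => exact ih
  | skipped n d Fs σs mins maxs σ F hGS hdisj hne h0 hmono hlt hd hF ih =>
    have key : ∀ k : Fin (d+1), wedgeLen σ (σs 0) ≤ wedgeLen σ (σs k) := by
      intro k
      rcases eq_or_ne k 0 with rfl | hk
      · exact le_refl _
      · exact (hmono 0 k (Fin.pos_of_ne_zero hk)).le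
    refine ⟨key (Fin.last d), ?_⟩
    intro τ hτ
    obtain ⟨k, hk⟩ := (hF τ).mp hτ
    have h1 : wedgeLen σ (σs k) < wedgeLen (σs k) τ :=
      lt_of_lt_of_le (hlt k) ((ih k).2 τ hk)
    rw [wedgeLen_eq_left h1]
    exact key k
  | attached n d Fs mins maxs σ F hGS hdisj hord hd hF ih =>
    have key : ∀ k : Fin (d+1), mins 0 ≤ mins k := by
      intro k
      induction k using Fin.induction with
      | zero => exact le_refl _
      | succ i ihh => exact ihh.trans ((ih i.castSucc).1.trans (hord i).le)
    constructor
    · exact (key (Fin.last d)).trans (ih (Fin.last d)).1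
    · intro τ hτ
      obtain ⟨k, hk⟩ := (hF τ).mp hτ
      exact (key k).trans ((ih k).2 τ hk)

/-- The auxiliary hierarchy of families of finite index sets along a comb. -/
inductive Tfam (ℓ : ℕ → ℕ) : ℕ → Finset ℕ → Prop
  | zero (J : Finset ℕ) : J.card ≤ 1 → Tfam ℓ 0 J
  | succ (n : ℕ) (J : Finset ℕ) (x : ℕ) (D : ℕ) (I : Fin D → Finset ℕ)
      (hI : ∀ k, Tfam ℓ n (I k))
      (hcov : ∀ i ∈ J, i ≠ x → ∃ k, i ∈ I k)
      (hD : ∀ i ∈ J, i ≠ x → D ≤ ℓ i) : Tfam ℓ (n + 1) J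

lemma tfam_mono {ℓ : ℕ → ℕ} (hone : ∀ i, 1 ≤ ℓ i) {n : ℕ} {J : Finset ℕ}
    (h : Tfam ℓ n J) : Tfam ℓ (n + 1) J := by
  refine Tfam.succ n J 0 1 (fun _ => J) (fun _ => h) ?_ ?_
  · intro i hi _; exact ⟨0, hi⟩
  · intro i _ _; exact hone i

/-- At most one comb element can wedge with `σ'` strictly beyond its own level. -/
lemma special_unique {t : ℕ → Cantor} {ℓ : ℕ → ℕ} {σc : Cantor}
    (hℓmono : StrictMono ℓ)
    (hwedge : ∀ i, wedgeLen σc (t i) = (ℓ i : ℕ∞)) (σ' : Cantor) :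
    ∀ i j : ℕ, i ≠ j → (ℓ i : ℕ∞) < wedgeLen σ' (t i) →
      (ℓ j : ℕ∞) < wedgeLen σ' (t j) → False := by
  have main : ∀ i j : ℕ, i < j → (ℓ i : ℕ∞) < wedgeLen σ' (t i) →
      (ℓ j : ℕ∞) < wedgeLen σ' (t j) → False := by
    intro i j hij hi hj
    have h1 : ∀ c < ℓ i + 1, σ' c = t i c := lt_wedgeLen_succ hi
    have h2 : ∀ c < ℓ j + 1, σ' c = t j c := lt_wedgeLen_succ hj
    have hci := wedgeLen_eq_coe_iff.mp (hwedge i)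
    have hcj := wedgeLen_eq_coe_iff.mp (hwedge j)
    have hlij : ℓ i < ℓ j := hℓmono hij
    have e1 : σ' (ℓ i) = t i (ℓ i) := h1 (ℓ i) (by omega)
    have e2 : σ' (ℓ i) = t j (ℓ i) := h2 (ℓ i) (by omega)
    have e3 : σc (ℓ i) = t j (ℓ i) := hcj.1 (ℓ i) hlij
    exact hci.2 (by rw [← e1, e2, ← e3])
  intro i j hij hi hj
  rcases lt_or_gt_of_ne hij with h | h
  · exact main i j h hi hj
  · exact main j i h hj hi

lemma exists_nonspecial {t : ℕ → Cantor} {ℓ : ℕ → ℕ} {σc : Cantor}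
    (hℓmono : StrictMono ℓ)
    (hwedge : ∀ i, wedgeLen σc (t i) = (ℓ i : ℕ∞)) (σ' : Cantor) :
    ∃ x : ℕ, ∀ i, i ≠ x → wedgeLen σ' (t i) ≤ (ℓ i : ℕ∞) := by
  by_cases h : ∃ i, (ℓ i : ℕ∞) < wedgeLen σ' (t i)
  · obtain ⟨x, hx⟩ := h
    refine ⟨x, fun i hix => ?_⟩
    by_contra hlt
    exact special_unique hℓmono hwedge σ' i x hix (not_le.mp hlt) hx
  · push_neg at h
    exact ⟨0, fun i _ => h i⟩

open Classical in
/-- The trace theorem: the trace of any `𝒢ₛ_n`-set on a comb lies in `Tfam ℓ n`. -/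
lemma trace_mem_Tfam {t : ℕ → Cantor} {ℓ : ℕ → ℕ} {σc : Cantor}
    (hinj : Function.Injective t) (hℓmono : StrictMono ℓ) (hone : ∀ i, 1 ≤ ℓ i)
    (hwedge : ∀ i, wedgeLen σc (t i) = (ℓ i : ℕ∞)) :
    ∀ {n : ℕ} {F : Finset Cantor} {σ' : Cantor} {m M : ℕ∞}, GS n F σ' m M →
    ∀ S₀ : Finset ℕ, Tfam ℓ n (S₀.filter fun i => t i ∈ F) := by
  intro n F σ' m M h
  induction h with
  | base d τs σ F h1 h2 h3 h4 hF =>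
    intro S₀
    obtain ⟨x, hx⟩ := exists_nonspecial hℓmono hwedge σ
    refine Tfam.succ 0 _ x (d+1) (fun k => S₀.filter fun i => t i = τs k) ?_ ?_ ?_
    · intro k
      refine Tfam.zero _ (Finset.card_le_one.mpr ?_)
      intro a ha b hb
      simp only [Finset.mem_filter] at ha hb
      exact hinj (ha.2.trans hb.2.symm)
    · intro i hi hix
      simp only [Finset.mem_filter] at hi ⊢
      obtain ⟨k, hk⟩ := (hF (t i)).mp hi.2
      exact ⟨k, hi.1, hk⟩
    · intro i hi hix
      simp only [Finset.mem_filter] at hi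
      have hfa := gs_factA (GS.base d τs σ F h1 h2 h3 h4 hF)
      have hchain : ((d + 1 : ℕ) : ℕ∞) ≤ (ℓ i : ℕ∞) :=
        h4.trans ((hfa.2 (t i) hi.2).trans (hx i hix))
      exact_mod_cast hchain
  | up n F σ m M h ih =>
    intro S₀
    exact tfam_mono hone (ih S₀)
  | skipped n d Fs σs mins maxs σ F hGS hdisj hne h0 hmono hlt hd hF ih =>
    intro S₀
    obtain ⟨x, hx⟩ := exists_nonspecial hℓmono hwedge σ
    refine Tfam.succ n _ x (d+1) (fun k => S₀.filter fun i => t i ∈ Fs k)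
      (fun k => ih k S₀) ?_ ?_
    · intro i hi hix
      simp only [Finset.mem_filter] at hi ⊢
      obtain ⟨k, hk⟩ := (hF (t i)).mp hi.2
      exact ⟨k, hi.1, hk⟩
    · intro i hi hix
      simp only [Finset.mem_filter] at hi
      have hfa := gs_factA (GS.skipped n d Fs σs mins maxs σ F hGS hdisj hne h0 hmono hlt hd hF)
      have hchain : ((d + 1 : ℕ) : ℕ∞) ≤ (ℓ i : ℕ∞) :=
        hd.trans ((hfa.2 (t i) hi.2).trans (hx i hix))
      exact_mod_cast hchain
  | attached n d Fs mins maxs σ F hGS hdisj hord hd hF ih =>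
    intro S₀
    obtain ⟨x, hx⟩ := exists_nonspecial hℓmono hwedge σ
    refine Tfam.succ n _ x (d+1) (fun k => S₀.filter fun i => t i ∈ Fs k)
      (fun k => ih k S₀) ?_ ?_
    · intro i hi hix
      simp only [Finset.mem_filter] at hi ⊢
      obtain ⟨k, hk⟩ := (hF (t i)).mp hi.2
      exact ⟨k, hi.1, hk⟩
    · intro i hi hix
      simp only [Finset.mem_filter] at hi
      have hfa := gs_factA (GS.attached n d Fs mins maxs σ F hGS hdisj hord hd hF)
      have hchain : ((d + 1 : ℕ) : ℕ∞) ≤ (ℓ i : ℕ∞) :=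
        hd.trans ((hfa.2 (t i) hi.2).trans (hx i hix))
      exact_mod_cast hchain

lemma infinite_inter_Ioi {B : Set ℕ} (hB : B.Infinite) (c : ℕ) :
    (B ∩ Set.Ioi c).Infinite := by
  have h : B ∩ Set.Ioi c = B \ Set.Iic c := by
    ext y; simp [Set.mem_Ioi, Set.mem_Iic, not_le]
  rw [h]
  exact hB.diff (Set.finite_Iic c)

lemma sum_le_sum_cover {A : Finset ℕ} {D : ℕ} {I : Fin D → Finset ℕ} {a : ℕ → ℝ}
    (ha : ∀ i, 0 ≤ a i) (hcov : ∀ i ∈ A, ∃ k, i ∈ I k) :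
    ∑ i ∈ A, a i ≤ ∑ k : Fin D, ∑ i ∈ A ∩ I k, a i := by
  classical
  have h1 : ∀ i ∈ A, a i ≤ ∑ k : Fin D, (if i ∈ I k then a i else 0) := by
    intro i hi
    obtain ⟨k, hk⟩ := hcov i hi
    calc a i = (if i ∈ I k then a i else 0) := by rw [if_pos hk]
    _ ≤ ∑ k : Fin D, (if i ∈ I k then a i else 0) :=
      Finset.single_le_sum (f := fun k => if i ∈ I k then a i else 0)
        (fun k _ => by split_ifs <;> simp [ha i]) (Finset.mem_univ k)
  calc ∑ i ∈ A, a i ≤ ∑ i ∈ A, ∑ k : Fin D, (if i ∈ I k then a i else 0) :=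
        Finset.sum_le_sum h1
  _ = ∑ k : Fin D, ∑ i ∈ A, (if i ∈ I k then a i else 0) := Finset.sum_comm
  _ = ∑ k : Fin D, ∑ i ∈ A ∩ I k, a i := by
      refine Finset.sum_congr rfl (fun k _ => ?_)
      rw [← Finset.sum_filter, Finset.filter_mem_eq_inter]

lemma exists_smallCombo (ℓ : ℕ → ℕ) (hℓ : Monotone ℓ) (hone : ∀ i, 1 ≤ ℓ i) :
    ∀ (n : ℕ) (B : Set ℕ), B.Infinite → ∀ δ : ℝ, 0 < δ →
    ∃ (S : Finset ℕ) (a : ℕ → ℝ), ↑S ⊆ B ∧ S.Nonempty ∧ (∀ i, 0 ≤ a i) ∧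
      (∀ i, i ∉ S → a i = 0) ∧ (∑ i ∈ S, a i = 1) ∧
      ∀ J : Finset ℕ, Tfam ℓ n J → ∑ i ∈ S ∩ J, a i ≤ δ := by
  classical
  intro n
  induction n with
  | zero =>
    intro B hB δ hδ
    set N : ℕ := max 1 ⌈δ⁻¹⌉₊ with hNdef
    have hN1 : 1 ≤ N := le_max_left _ _
    have hNpos : (0:ℝ) < N := by exact_mod_cast Nat.lt_of_lt_of_le Nat.zero_lt_one hN1
    have hNinv : (N:ℝ)⁻¹ ≤ δ := by
      have h1 : δ⁻¹ ≤ (N:ℝ) := by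
        calc δ⁻¹ ≤ (⌈δ⁻¹⌉₊ : ℝ) := Nat.le_ceil _
        _ ≤ (N:ℝ) := by exact_mod_cast le_max_right 1 ⌈δ⁻¹⌉₊
      rw [inv_eq_one_div, div_le_iff₀ hNpos]
      calc (1:ℝ) = δ * δ⁻¹ := (mul_inv_cancel₀ hδ.ne').symm
      _ ≤ δ * N := by gcongr
    obtain ⟨S, hSB, hScard⟩ := hB.exists_subset_card_eq N
    refine ⟨S, fun i => if i ∈ S then (N:ℝ)⁻¹ else 0, hSB, ?_, ?_, ?_, ?_, ?_⟩
    · rw [← Finset.card_pos, hScard]; omega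
    · intro i; dsimp only; split_ifs <;> positivity
    · intro i hi; dsimp only; rw [if_neg hi]
    · rw [Finset.sum_congr rfl (fun i hi => if_pos hi), Finset.sum_const, hScard,
        nsmul_eq_mul, mul_inv_cancel₀ hNpos.ne']
    · intro J hJ
      have hJ1 : J.card ≤ 1 := by cases hJ with | zero _ h => exact h
      calc ∑ i ∈ S ∩ J, (if i ∈ S then (N:ℝ)⁻¹ else 0)
          ≤ ∑ _i ∈ S ∩ J, (N:ℝ)⁻¹ := by
            refine Finset.sum_le_sum (fun i _ => ?_)
            split_ifs <;> simp [le_of_lt, inv_nonneg.mpr hNpos.le]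
      _ = (S ∩ J).card * (N:ℝ)⁻¹ := by rw [Finset.sum_const, nsmul_eq_mul]
      _ ≤ 1 * (N:ℝ)⁻¹ := by
            have : (S ∩ J).card ≤ 1 := le_trans (Finset.card_le_card Finset.inter_subset_right) hJ1
            have h0 : (0:ℝ) ≤ (N:ℝ)⁻¹ := inv_nonneg.mpr hNpos.le
            have hc : ((S ∩ J).card : ℝ) ≤ 1 := by exact_mod_cast this
            exact mul_le_mul_of_nonneg_right hc h0
      _ ≤ δ := by rw [one_mul]; exact hNinv
  | succ n ih =>
    intro B hB δ hδ
    choose SS aa hsub hne hpos hzero hsum hguar using ih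
    set δ' : ℝ := δ/4 with hδ'def
    have hδ' : 0 < δ' := by positivity
    let Rec : ℕ → Σ' (B' : Set ℕ) (_ : B'.Infinite) (d : ℝ), 0 < d := fun r =>
      Nat.rec ⟨B, hB, δ', hδ'⟩
        (fun _ p =>
          ⟨p.1 ∩ Set.Ioi ((SS p.1 p.2.1 p.2.2.1 p.2.2.2).max'
              (hne p.1 p.2.1 p.2.2.1 p.2.2.2)),
           infinite_inter_Ioi p.2.1 _,
           δ' / (ℓ ((SS p.1 p.2.1 p.2.2.1 p.2.2.2).max' (hne p.1 p.2.1 p.2.2.1 p.2.2.2))),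
           div_pos hδ' (by exact_mod_cast Nat.lt_of_lt_of_le Nat.zero_lt_one (hone _))⟩) r
    set Sr : ℕ → Finset ℕ := fun r => SS (Rec r).1 (Rec r).2.1 (Rec r).2.2.1 (Rec r).2.2.2 with hSrdef
    set ar : ℕ → ℕ → ℝ := fun r => aa (Rec r).1 (Rec r).2.1 (Rec r).2.2.1 (Rec r).2.2.2 with hardef
    set dr : ℕ → ℝ := fun r => (Rec r).2.2.1 with hdrdef
    have hSrne : ∀ r, (Sr r).Nonempty := fun r => hne _ _ _ _
    set mx : ℕ → ℕ := fun r => (Sr r).max' (hSrne r) with hmxdef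
    have hRecS : ∀ r, (Rec (r+1)).1 = (Rec r).1 ∩ Set.Ioi (mx r) := fun r => rfl
    have hRecD : ∀ r, dr (r+1) = δ' / (ℓ (mx r)) := fun r => rfl
    have hRec0 : (Rec 0).1 = B := rfl
    have hSrB : ∀ r, ↑(Sr r) ⊆ (Rec r).1 := fun r => hsub _ _ _ _
    have harpos : ∀ r i, 0 ≤ ar r i := fun r => hpos _ _ _ _
    have harzero : ∀ r i, i ∉ Sr r → ar r i = 0 := fun r => hzero _ _ _ _
    have harsum : ∀ r, ∑ i ∈ Sr r, ar r i = 1 := fun r => hsum _ _ _ _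
    have harg : ∀ r (J : Finset ℕ), Tfam ℓ n J → ∑ i ∈ Sr r ∩ J, ar r i ≤ dr r :=
      fun r => hguar _ _ _ _
    have hdrpos : ∀ r, 0 < dr r := fun r => (Rec r).2.2.2
    have hBdec : ∀ r, (Rec (r+1)).1 ⊆ (Rec r).1 := by
      intro r; rw [hRecS r]; exact Set.inter_subset_left
    have hBchain : ∀ ρ r, ρ ≤ r → (Rec r).1 ⊆ (Rec ρ).1 := by
      intro ρ r hle
      induction r with
      | zero => have : ρ = 0 := by omega
                subst this; exact subset_rfl
      | succ r ihr =>
        rcases Nat.lt_or_ge ρ (r+1) with h | h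
        · exact (hBdec r).trans (ihr (by omega))
        · have : ρ = r+1 := by omega
          subst this; exact subset_rfl
    have hBsubB : ∀ r, (Rec r).1 ⊆ B := fun r => hBchain 0 r (by omega)
    have hord : ∀ ρ r, ρ < r → ∀ i ∈ Sr r, mx ρ < i := by
      intro ρ r hlt i hi
      have h1 : (i : ℕ) ∈ (Rec r).1 := hSrB r hi
      have h2 : (i : ℕ) ∈ (Rec (ρ+1)).1 := hBchain (ρ+1) r (by omega) h1
      rw [hRecS ρ] at h2
      exact h2.2
    have hmxmono : ∀ ρ r, ρ ≤ r → mx ρ ≤ mx r := by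
      intro ρ r hle
      rcases Nat.lt_or_ge ρ r with h | h
      · exact (hord ρ r h _ ((Sr r).max'_mem (hSrne r))).le
      · have : ρ = r := by omega
        subst this; exact le_rfl
    have hdisjS : ∀ ρ r, ρ < r → ∀ i, i ∈ Sr ρ → i ∉ Sr r := by
      intro ρ r hlt i hiρ hir
      exact absurd ((Sr ρ).le_max' i hiρ) (not_le.mpr (hord ρ r hlt i hir))
    -- the number of blocks
    set R : ℕ := max 1 ⌈4/δ⌉₊ with hRdef
    have hR1 : 1 ≤ R := le_max_left _ _
    have hRpos : (0:ℝ) < R := by exact_mod_cast Nat.lt_of_lt_of_le Nat.zero_lt_one hR1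
    have hRinv : (R:ℝ)⁻¹ ≤ δ/4 := by
      have h1 : 4/δ ≤ (R:ℝ) := by
        calc 4/δ ≤ (⌈4/δ⌉₊ : ℝ) := Nat.le_ceil _
        _ ≤ (R:ℝ) := by exact_mod_cast le_max_right 1 ⌈4/δ⌉₊
      rw [inv_eq_one_div, div_le_div_iff₀ hRpos (by positivity : (0:ℝ) < 4)]
      calc (1:ℝ) * 4 = δ * (4/δ) := by field_simp
      _ ≤ δ * R := by gcongr
      _ = δ * R := rfl
    set S : Finset ℕ := (Finset.range R).biUnion Sr with hSdef
    set a : ℕ → ℝ := fun i => (R:ℝ)⁻¹ * ∑ r ∈ Finset.range R, ar r i with hadef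
    have hapos : ∀ i, 0 ≤ a i := by
      intro i
      apply mul_nonneg (inv_nonneg.mpr hRpos.le)
      exact Finset.sum_nonneg (fun r _ => harpos r i)
    have hSrS : ∀ r, r < R → Sr r ⊆ S := by
      intro r hr i hi
      exact Finset.mem_biUnion.mpr ⟨r, Finset.mem_range.mpr hr, hi⟩
    have hsuminner : ∀ r, r < R → ∑ i ∈ S, ar r i = 1 := by
      intro r hr
      rw [← harsum r]
      exact (Finset.sum_subset (hSrS r hr) (fun i _ hiS => harzero r i hiS)).symm
    refine ⟨S, a, ?_, ?_, hapos, ?_, ?_, ?_⟩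
    · intro i hi
      obtain ⟨r, hrR, hir⟩ := Finset.mem_biUnion.mp hi
      exact hBsubB r (hSrB r hir)
    · exact ((hSrne 0).mono (hSrS 0 (by omega)))
    · intro i hi
      have hz : ∀ r ∈ Finset.range R, ar r i = 0 := by
        intro r hr
        refine harzero r i (fun hir => hi ?_)
        exact hSrS r (Finset.mem_range.mp hr) hir
      rw [hadef]
      simp only []
      rw [Finset.sum_congr rfl hz, Finset.sum_const, smul_zero, mul_zero]
    · rw [hadef]
      simp only []
      rw [← Finset.mul_sum]
      rw [Finset.sum_comm]
      rw [Finset.sum_congr rfl (fun r hr => hsuminner r (Finset.mem_range.mp hr))]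
      rw [Finset.sum_const, Finset.card_range, nsmul_eq_mul, mul_one,
        inv_mul_cancel₀ hRpos.ne']
    · -- the key estimate
      intro J hJ
      cases hJ with
      | succ _ _ x D I hI hcov hD =>
      set J' : Finset ℕ := J.erase x with hJ'def
      -- per-r sums
      set Mr : ℕ → ℝ := fun r => ∑ i ∈ Sr r ∩ J', ar r i with hMrdef
      have hMrpos : ∀ r, 0 ≤ Mr r :=
        fun r => Finset.sum_nonneg (fun i _ => harpos r i)
      have hred : ∀ r, r < R → ∑ i ∈ S ∩ J', ar r i = Mr r := by
        intro r hr
        refine (Finset.sum_subset ?_ ?_).symm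
        · exact Finset.inter_subset_inter_right (hSrS r hr)
        · intro i hiS hinot
          refine harzero r i (fun hir => hinot ?_)
          exact Finset.mem_inter.mpr ⟨hir, (Finset.mem_inter.mp hiS).2⟩
      -- freebie bound
      have hax : a x ≤ (R:ℝ)⁻¹ := by
        have hsum1 : ∑ r ∈ Finset.range R, ar r x ≤ 1 := by
          by_cases hex : ∃ r ∈ Finset.range R, x ∈ Sr r
          · obtain ⟨r₀, hr₀R, hr₀⟩ := hex
            have heq : ∑ r ∈ Finset.range R, ar r x = ar r₀ x := by
              refine Finset.sum_eq_single_of_mem r₀ hr₀R (fun r hr hrne => ?_)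
              refine harzero r x (fun hxr => ?_)
              rcases lt_or_gt_of_ne hrne with h | h
              · exact hdisjS r r₀ h x hxr hr₀
              · exact hdisjS r₀ r h x hr₀ hxr
            rw [heq, ← harsum r₀]
            exact Finset.single_le_sum (fun i _ => harpos r₀ i) hr₀
          · push_neg at hex
            have : ∀ r ∈ Finset.range R, ar r x = 0 :=
              fun r hr => harzero r x (hex r hr)
            rw [Finset.sum_congr rfl this, Finset.sum_const, smul_zero]
            norm_num
        calc a x = (R:ℝ)⁻¹ * ∑ r ∈ Finset.range R, ar r x := rfl
        _ ≤ (R:ℝ)⁻¹ * 1 := by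
            apply mul_le_mul_of_nonneg_left hsum1 (inv_nonneg.mpr hRpos.le)
        _ = (R:ℝ)⁻¹ := mul_one _
      -- split off the freebie
      have hsplit : ∑ i ∈ S ∩ J, a i ≤ (∑ i ∈ S ∩ J', a i) + a x := by
        by_cases hx : x ∈ S ∩ J
        · have hxe : (S ∩ J).erase x = S ∩ J' := by
            ext i
            simp only [Finset.mem_erase, Finset.mem_inter, hJ'def]
            tauto
          rw [← Finset.sum_erase_add (S ∩ J) a hx, hxe]
        · have hxe : S ∩ J' = S ∩ J := by
            ext i
            simp only [Finset.mem_erase, Finset.mem_inter, hJ'def]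
            constructor
            · rintro ⟨h1, _, h2⟩; exact ⟨h1, h2⟩
            · rintro ⟨h1, h2⟩
              refine ⟨h1, fun hix => hx ?_, h2⟩
              subst hix
              exact Finset.mem_inter.mpr ⟨h1, h2⟩
          rw [hxe]
          have := hapos x
          linarith
      -- main bound on ∑_{i ∈ S ∩ J'} a i
      have hmain : ∑ i ∈ S ∩ J', a i ≤ (R:ℝ)⁻¹ * (1 + R * δ') := by
        have hdecomp : ∑ i ∈ S ∩ J', a i
            = (R:ℝ)⁻¹ * ∑ r ∈ Finset.range R, Mr r := by
          rw [hadef]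
          simp only []
          rw [← Finset.mul_sum, Finset.sum_comm]
          congr 1
          exact Finset.sum_congr rfl (fun r hr => hred r (Finset.mem_range.mp hr))
        rw [hdecomp]
        have hbound : ∑ r ∈ Finset.range R, Mr r ≤ 1 + R * δ' := by
          by_cases hex : ∃ r, r < R ∧ (Sr r ∩ J').Nonempty
          · set ρ : ℕ := Nat.find hex with hρdef
            obtain ⟨hρR, bstar, hbstar⟩ := Nat.find_spec hex
            have hbS : bstar ∈ Sr ρ := (Finset.mem_inter.mp hbstar).1
            have hbJ' : bstar ∈ J' := (Finset.mem_inter.mp hbstar).2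
            have hbJ : bstar ∈ J := Finset.mem_of_mem_erase hbJ'
            have hbne : bstar ≠ x := Finset.ne_of_mem_erase hbJ'
            have hDb : D ≤ ℓ bstar := hD bstar hbJ hbne
            have hperr : ∀ r ∈ Finset.range R, Mr r ≤ δ' + (if r = ρ then 1 else 0) := by
              intro r hrR
              rcases lt_trichotomy r ρ with h | h | h
              · have hempty : ¬ (Sr r ∩ J').Nonempty := by
                  intro hne'
                  exact Nat.find_min hex h ⟨Finset.mem_range.mp hrR, hne'⟩
                rw [Finset.not_nonempty_iff_eq_empty] at hempty
                have hMr0 : Mr r = 0 := by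
                  have he : Mr r = ∑ i ∈ Sr r ∩ J', ar r i := rfl
                  rw [he, hempty, Finset.sum_empty]
                rw [hMr0]
                split_ifs <;> linarith [hδ']
              · rw [if_pos h]
                have h1 : Mr r ≤ 1 := by
                  have he : Mr r = ∑ i ∈ Sr r ∩ J', ar r i := rfl
                  rw [he, ← harsum r]
                  exact Finset.sum_le_sum_of_subset_of_nonneg Finset.inter_subset_left
                    (fun i _ _ => harpos r i)
                linarith [hδ']
              · rw [if_neg (by omega)]
                obtain ⟨s, rfl⟩ : ∃ s, r = s + 1 :=
                  ⟨r - 1, by omega⟩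
                have hcov' : ∀ i ∈ Sr (s+1) ∩ J', ∃ k, i ∈ I k := by
                  intro i hi
                  have hiJ' : i ∈ J' := (Finset.mem_inter.mp hi).2
                  exact hcov i (Finset.mem_of_mem_erase hiJ') (Finset.ne_of_mem_erase hiJ')
                have h1 : Mr (s+1) ≤ ∑ k : Fin D, ∑ i ∈ (Sr (s+1) ∩ J') ∩ I k, ar (s+1) i :=
                  sum_le_sum_cover (harpos (s+1)) hcov'
                have h2 : ∀ k : Fin D, ∑ i ∈ (Sr (s+1) ∩ J') ∩ I k, ar (s+1) i ≤ dr (s+1) := by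
                  intro k
                  calc ∑ i ∈ (Sr (s+1) ∩ J') ∩ I k, ar (s+1) i
                      ≤ ∑ i ∈ Sr (s+1) ∩ I k, ar (s+1) i := by
                        refine Finset.sum_le_sum_of_subset_of_nonneg ?_ (fun i _ _ => harpos (s+1) i)
                        intro i hi
                        rw [Finset.mem_inter] at hi ⊢
                        exact ⟨(Finset.mem_inter.mp hi.1).1, hi.2⟩
                  _ ≤ dr (s+1) := harg (s+1) (I k) (hI k)
                have h3 : Mr (s+1) ≤ (D : ℝ) * dr (s+1) := by
                  calc Mr (s+1) ≤ ∑ k : Fin D, ∑ i ∈ (Sr (s+1) ∩ J') ∩ I k, ar (s+1) i := h1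
                  _ ≤ ∑ _k : Fin D, dr (s+1) := Finset.sum_le_sum (fun k _ => h2 k)
                  _ = (D : ℝ) * dr (s+1) := by
                      rw [Finset.sum_const, Finset.card_univ, Fintype.card_fin, nsmul_eq_mul]
                have h4 : (D : ℝ) * dr (s+1) ≤ δ' := by
                  rw [hRecD s]
                  have hDL : D ≤ ℓ (mx s) := by
                    calc D ≤ ℓ bstar := hDb
                    _ ≤ ℓ (mx ρ) := hℓ ((Sr ρ).le_max' bstar hbS)
                    _ ≤ ℓ (mx s) := hℓ (hmxmono ρ s (by omega))
                  have hLpos : (0:ℝ) < (ℓ (mx s) : ℝ) := by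
                    exact_mod_cast Nat.lt_of_lt_of_le Nat.zero_lt_one (hone _)
                  calc (D : ℝ) * (δ' / (ℓ (mx s) : ℝ))
                      ≤ (ℓ (mx s) : ℝ) * (δ' / (ℓ (mx s) : ℝ)) := by
                        apply mul_le_mul_of_nonneg_right _ (by positivity)
                        exact_mod_cast hDL
                  _ = δ' := by field_simp
                linarith
            calc ∑ r ∈ Finset.range R, Mr r
                ≤ ∑ r ∈ Finset.range R, (δ' + (if r = ρ then 1 else 0)) :=
                  Finset.sum_le_sum hperr
            _ = R * δ' + 1 := by
                rw [Finset.sum_add_distrib, Finset.sum_const, Finset.card_range,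
                  nsmul_eq_mul, Finset.sum_ite_eq' (Finset.range R) ρ (fun _ => (1:ℝ)),
                  if_pos (Finset.mem_range.mpr hρR)]
            _ = 1 + R * δ' := by ring
          · push_neg at hex
            have hz : ∀ r ∈ Finset.range R, Mr r = 0 := by
              intro r hr
              have hth := hex r (Finset.mem_range.mp hr)
              have he : Mr r = ∑ i ∈ Sr r ∩ J', ar r i := rfl
              rw [he, hth, Finset.sum_empty]
            rw [Finset.sum_congr rfl hz, Finset.sum_const, smul_zero]
            have : (0:ℝ) ≤ R * δ' := by positivity
            linarith
        apply mul_le_mul_of_nonneg_left hbound (inv_nonneg.mpr hRpos.le)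
      -- put everything together
      have hfinal : (R:ℝ)⁻¹ * (1 + R * δ') + (R:ℝ)⁻¹ ≤ δ := by
        have he : (R:ℝ)⁻¹ * (1 + R * δ') = (R:ℝ)⁻¹ + δ' := by
          rw [mul_add, mul_one, ← mul_assoc, inv_mul_cancel₀ hRpos.ne', one_mul]
        rw [he, hδ'def]
        linarith [hRinv]
      calc ∑ i ∈ S ∩ J, a i ≤ (∑ i ∈ S ∩ J', a i) + a x := hsplit
      _ ≤ (R:ℝ)⁻¹ * (1 + R * δ') + (R:ℝ)⁻¹ := add_le_add hmain hax
      _ ≤ δ := hfinal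

open Classical in
/-- From any injective sequence in the Cantor set one can extract a "comb":
a spine `σc` and a subsequence whose wedge-lengths with `σc` are finite,
positive and strictly increasing. -/
lemma exists_comb (u : ℕ → Cantor) (hu : Function.Injective u) :
    ∃ (σc : Cantor) (g : ℕ → ℕ) (ℓ : ℕ → ℕ),
      StrictMono g ∧ StrictMono ℓ ∧ (∀ i, 1 ≤ ℓ i) ∧
      (∀ i, wedgeLen σc (u (g i)) = (ℓ i : ℕ∞)) := by
  classical
  set U : Ultrafilter ℕ := Filter.hyperfilter ℕ with hU
  set σc : Cantor := fun j => if {k | u k j = true} ∈ U then true else false with hσc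
  have hE : ∀ j, {k | u k j = σc j} ∈ U := by
    intro j
    by_cases h : {k | u k j = true} ∈ U
    · have hj : σc j = true := if_pos h
      rw [hj]; exact h
    · have hj : σc j = false := if_neg h
      rw [hj]
      have he : {k | u k j = false} = {k | u k j = true}ᶜ := by
        ext k; simp [Bool.not_eq_true]
      rw [he]
      exact (Ultrafilter.compl_mem_iff_notMem).mpr h
  have hR : ∀ m, {k | ∀ j < m, u k j = σc j} ∈ U := by
    intro m
    induction m with
    | zero =>
      have he : {k : ℕ | ∀ j < 0, u k j = σc j} = Set.univ := by
        ext k; simp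
      rw [he]; exact Filter.univ_mem
    | succ m ihm =>
      have he : {k | ∀ j < m+1, u k j = σc j}
          = {k | ∀ j < m, u k j = σc j} ∩ {k | u k m = σc m} := by
        ext k
        simp only [Set.mem_inter_iff, Set.mem_setOf_eq]
        constructor
        · intro h; exact ⟨fun j hj => h j (by omega), h m (by omega)⟩
        · rintro ⟨h1, h2⟩ j hj
          rcases Nat.lt_or_ge j m with h | h
          · exact h1 j h
          · have : j = m := by omega
            subst this; exact h2
      rw [he]
      exact Filter.inter_mem ihm (hE m)
  have hinf : ∀ m, {k | ∀ j < m, u k j = σc j}.Infinite := by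
    intro m
    by_contra h
    rw [Set.not_infinite] at h
    exact Set.Finite.notMem_hyperfilter h (hR m)
  have hbadfin : {k | u k = σc}.Finite := by
    apply Set.Subsingleton.finite
    intro k1 h1 k2 h2
    exact hu (h1.trans h2.symm)
  have claim : ∀ c N : ℕ, ∃ k, N + 1 ≤ k ∧ (∀ j < c + 1, u k j = σc j) ∧ u k ≠ σc := by
    intro c N
    have h1 : ({k | ∀ j < c+1, u k j = σc j} \ ({k | u k = σc} ∪ Set.Iic N)).Infinite :=
      (hinf (c+1)).diff (hbadfin.union (Set.finite_Iic N))
    obtain ⟨k, hk⟩ := h1.nonempty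
    refine ⟨k, ?_, hk.1, ?_⟩
    · have h2 := hk.2
      simp only [Set.mem_union, Set.mem_Iic, Set.mem_setOf_eq, not_or, not_le] at h2
      omega
    · intro he; exact hk.2 (Set.mem_union_left _ he)
  let ψ : ℕ → ℕ := fun i => Nat.rec (Classical.choose (claim 0 0))
      (fun _ prev => Classical.choose (claim ((wedgeLen σc (u prev)).toNat) prev)) i
  have hψ0 : ψ 0 = Classical.choose (claim 0 0) := rfl
  have hψs : ∀ i, ψ (i+1)
      = Classical.choose (claim ((wedgeLen σc (u (ψ i))).toNat) (ψ i)) := fun _ => rfl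
  set ℓ : ℕ → ℕ := fun i => (wedgeLen σc (u (ψ i))).toNat with hℓdef
  have hne0 : ∀ i, u (ψ i) ≠ σc := by
    intro i
    cases i with
    | zero => exact (Classical.choose_spec (claim 0 0)).2.2
    | succ i => rw [hψs i]; exact (Classical.choose_spec (claim _ _)).2.2
  have hwnetop : ∀ i, wedgeLen σc (u (ψ i)) ≠ ⊤ :=
    fun i => wedgeLen_ne_top (fun h => hne0 i h.symm)
  have hcoe : ∀ i, wedgeLen σc (u (ψ i)) = (ℓ i : ℕ∞) :=
    fun i => (ENat.coe_toNat (hwnetop i)).symm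
  have hag0 : ∀ j < 1, u (ψ 0) j = σc j := by
    rw [hψ0]
    exact (Classical.choose_spec (claim 0 0)).2.1
  have hags : ∀ i, ∀ j < ℓ i + 1, u (ψ (i+1)) j = σc j := by
    intro i
    rw [hψs i]
    exact (Classical.choose_spec (claim _ _)).2.1
  have hlow : ∀ i, 1 ≤ ℓ i := by
    intro i
    have h1 : ((1:ℕ) : ℕ∞) ≤ wedgeLen σc (u (ψ i)) := by
      rw [le_wedgeLen_iff]
      intro j hj
      cases i with
      | zero => exact (hag0 j hj).symm
      | succ i => exact (hags i j (by omega)).symm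
    rw [hcoe i] at h1
    exact_mod_cast h1
  have hlstep : ∀ i, ℓ i < ℓ (i+1) := by
    intro i
    have h1 : ((ℓ i + 1 : ℕ) : ℕ∞) ≤ wedgeLen σc (u (ψ (i+1))) := by
      rw [le_wedgeLen_iff]
      intro j hj
      exact (hags i j hj).symm
    rw [hcoe (i+1)] at h1
    have : ℓ i + 1 ≤ ℓ (i+1) := by exact_mod_cast h1
    omega
  have hψstep : ∀ i, ψ i < ψ (i+1) := by
    intro i
    rw [hψs i]
    have := (Classical.choose_spec (claim ((wedgeLen σc (u (ψ i))).toNat) (ψ i))).1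
    omega
  exact ⟨σc, ψ, ℓ, strictMono_nat_of_lt_succ hψstep, strictMono_nat_of_lt_succ hlstep,
    hlow, hcoe⟩

theorem Xn_unit_vectors_weakly_null (n : ℕ) (hn : 1 ≤ n) (X : Type*)
    [NormedAddCommGroup X] [NormedSpace ℝ X] [CompleteSpace X]
    (T : (Cantor →₀ ℝ) →ₗ[ℝ] X) (hT : ∀ x, ‖T x‖ = gnorm n x)
    (hdense : DenseRange T)
    (τ : ℕ → Cantor) (hτ : Function.Injective τ) :
    ∀ f : X →L[ℝ] ℝ,
      Filter.Tendsto (fun k => f (T (Finsupp.single (τ k) (1 : ℝ))))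
        Filter.atTop (nhds 0) := by
  classical
  intro f
  by_contra hcon
  set v : ℕ → ℝ := fun k => f (T (Finsupp.single (τ k) (1 : ℝ))) with hv
  rw [Metric.tendsto_atTop] at hcon
  push_neg at hcon
  obtain ⟨ε, hε, hcon⟩ := hcon
  have hcon' : ∀ N, ∃ k ≥ N, ε ≤ |v k| := by
    intro N
    obtain ⟨k, hk1, hk2⟩ := hcon N
    refine ⟨k, hk1, ?_⟩
    rw [Real.dist_eq, sub_zero] at hk2
    exact hk2
  have hAinf : {k | ε ≤ |v k|}.Infinite := by
    intro hfin
    obtain ⟨N, hN⟩ := hfin.bddAbove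
    obtain ⟨k, hk1, hk2⟩ := hcon' (N + 1)
    have : k ≤ N := hN hk2
    omega
  obtain ⟨s, hs_abs, A, hAinf', hA⟩ :
      ∃ (s : ℝ) (_ : |s| = 1) (A : Set ℕ), A.Infinite ∧ ∀ k ∈ A, ε ≤ s * v k := by
    set Ap : Set ℕ := {k | ε ≤ |v k| ∧ 0 ≤ v k} with hApdef
    set Am : Set ℕ := {k | ε ≤ |v k| ∧ v k < 0} with hAmdef
    have hunion : {k | ε ≤ |v k|} ⊆ Ap ∪ Am := by
      intro k hk
      rcases le_or_gt 0 (v k) with h | h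
      · exact Set.mem_union_left _ ⟨hk, h⟩
      · exact Set.mem_union_right _ ⟨hk, h⟩
    have hui := hAinf.mono hunion
    rw [Set.infinite_union] at hui
    rcases hui with h | h
    · refine ⟨1, by norm_num, Ap, h, fun k hk => ?_⟩
      have h1 := hk.1
      rw [abs_of_nonneg hk.2] at h1
      linarith
    · refine ⟨-1, by norm_num, Am, h, fun k hk => ?_⟩
      have h1 := hk.1
      rw [abs_of_neg hk.2] at h1
      linarith
  -- enumerate A and extract a comb
  set e : ℕ ↪ ↑A := hAinf'.natEmbedding with hedef
  set u : ℕ → Cantor := fun k => τ ((e k : ℕ)) with hudef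
  have huinj : Function.Injective u := by
    intro k1 k2 h
    have h1 : ((e k1 : ℕ)) = ((e k2 : ℕ)) := hτ h
    exact e.injective (Subtype.ext h1)
  obtain ⟨σc, g, ℓ, hgmono, hℓmono, hone, hwedge⟩ := exists_comb u huinj
  set t : ℕ → Cantor := fun i => u (g i) with htdef
  have htinj : Function.Injective t := huinj.comp hgmono.injective
  have htwedge : ∀ i, wedgeLen σc (t i) = (ℓ i : ℕ∞) := hwedge
  have hprop : ∀ i, ε ≤ s * f (T (Finsupp.single (t i) (1 : ℝ))) := by
    intro i
    have h1 : ((e (g i) : ℕ)) ∈ A := (e (g i)).2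
    exact hA _ h1
  -- the small convex combination
  set δ : ℝ := ε / (2 * (‖f‖ + 1)) with hδdef
  have hδpos : 0 < δ := by
    apply div_pos hε
    positivity
  obtain ⟨S, a, hSsub, hSne, hapos, hazero, hasum, hguar⟩ :=
    exists_smallCombo ℓ hℓmono.monotone hone n Set.univ Set.infinite_univ δ hδpos
  set xv : Cantor →₀ ℝ := ∑ i ∈ S, a i • Finsupp.single (t i) (1 : ℝ) with hxvdef
  have hxval : ∀ F : Finset Cantor,
      ∑ τ' ∈ F, xv τ' = ∑ i ∈ S.filter (fun i => t i ∈ F), a i := by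
    intro F
    have h1 : ∀ τ', xv τ' = ∑ i ∈ S, a i * (if t i = τ' then 1 else 0) := by
      intro τ'
      rw [hxvdef, Finsupp.finset_sum_apply]
      refine Finset.sum_congr rfl (fun i _ => ?_)
      rw [Finsupp.smul_apply, Finsupp.single_apply, smul_eq_mul]
    calc ∑ τ' ∈ F, xv τ' = ∑ τ' ∈ F, ∑ i ∈ S, a i * (if t i = τ' then 1 else 0) :=
          Finset.sum_congr rfl (fun τ' _ => h1 τ')
    _ = ∑ i ∈ S, ∑ τ' ∈ F, a i * (if t i = τ' then 1 else 0) := Finset.sum_comm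
    _ = ∑ i ∈ S, a i * (if t i ∈ F then 1 else 0) := by
          refine Finset.sum_congr rfl (fun i _ => ?_)
          rw [← Finset.mul_sum]
          congr 1
          exact Finset.sum_ite_eq F (t i) (fun _ => (1:ℝ))
    _ = ∑ i ∈ S.filter (fun i => t i ∈ F), a i := by
          rw [Finset.sum_filter]
          exact Finset.sum_congr rfl (fun i _ => by split_ifs <;> ring)
  have hnorm : gnorm n xv ≤ δ := by
    apply Real.sSup_le
    · rintro r ⟨F, hF, rfl⟩
      simp only [Gfam, Set.mem_setOf_eq] at hF
      rcases hF with rfl | ⟨σ', m, M, hGS⟩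
      · simp only [Finset.sum_empty, abs_zero]
        exact hδpos.le
      · rw [hxval F]
        have htr := trace_mem_Tfam htinj hℓmono hone htwedge hGS S
        have hg := hguar _ htr
        have hin : S ∩ S.filter (fun i => t i ∈ F) = S.filter (fun i => t i ∈ F) := by
          apply Finset.inter_eq_right.mpr
          exact Finset.filter_subset _ _
        rw [hin] at hg
        rw [abs_of_nonneg (Finset.sum_nonneg fun i _ => hapos i)]
        exact hg
    · exact hδpos.le
  have hfTx : |f (T xv)| ≤ ‖f‖ * δ := by
    calc |f (T xv)| = ‖f (T xv)‖ := (Real.norm_eq_abs _).symm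
    _ ≤ ‖f‖ * ‖T xv‖ := f.le_opNorm _
    _ ≤ ‖f‖ * δ := by
        apply mul_le_mul_of_nonneg_left _ (norm_nonneg f)
        rw [hT]
        exact hnorm
  have hlow : ε ≤ s * f (T xv) := by
    have hTlin : f (T xv) = ∑ i ∈ S, a i * f (T (Finsupp.single (t i) (1:ℝ))) := by
      rw [hxvdef, map_sum, map_sum]
      refine Finset.sum_congr rfl (fun i _ => ?_)
      rw [map_smul, map_smul, smul_eq_mul]
    rw [hTlin, Finset.mul_sum]
    calc ε = ∑ i ∈ S, a i * ε := by rw [← Finset.sum_mul, hasum, one_mul]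
    _ ≤ ∑ i ∈ S, s * (a i * f (T (Finsupp.single (t i) (1:ℝ)))) := by
        refine Finset.sum_le_sum (fun i _ => ?_)
        have h1 := hprop i
        calc a i * ε ≤ a i * (s * f (T (Finsupp.single (t i) (1:ℝ)))) :=
              mul_le_mul_of_nonneg_left h1 (hapos i)
        _ = s * (a i * f (T (Finsupp.single (t i) (1:ℝ)))) := by ring
  have habs : ε ≤ |f (T xv)| := by
    calc ε ≤ s * f (T xv) := hlow
    _ ≤ |s * f (T xv)| := le_abs_self _
    _ = |f (T xv)| := by rw [abs_mul, hs_abs, one_mul]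
  have hlt : ‖f‖ * δ < ε := by
    rw [hδdef, ← mul_div_assoc, div_lt_iff₀ (by positivity : (0:ℝ) < 2 * (‖f‖ + 1))]
    nlinarith [norm_nonneg f, hε]
  linarith
end
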